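/- Let ξ̃ be a non-negative random variable with mean μ > 0 and variance σ² > 0, and let γ satisfy μ ≤ γ < μ + σ²/μ. Then there is no distribution P supported on [0,∞) with mean μ and variance σ² satisfying P(ξ̃ ≥ γ) = μ/γ. -/

import Mathlib

open MeasureTheory

theorem stmt_1 (μ σ γ : ℝ) (hμ : 0 < μ) (hσ : 0 < σ)
    (hγ1 : μ ≤ γ) (hγ2 : γ < μ + σ^2 / μ)
    (P : Measure ℝ) (hP : IsProbabilityMeasure P)
    (hsupp : P {x | x < 0} = 0)
    (hint1 : Integrable (fun x => x) P)
    (hint2 : Integrable (fun x => x^2) P)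
    (hmean : ∫ x, x ∂P = μ)
    (hvar : ∫ x, (x - μ)^2 ∂P = σ^2) :
    P {x | γ ≤ x} ≠ ENNReal.ofReal (μ / γ) := by
  intro hmark
  set A : Set ℝ := {x | γ ≤ x} with hAdef
  have hAm : MeasurableSet A := measurableSet_le measurable_const measurable_id
  have hγ0 : 0 < γ := lt_of_lt_of_le hμ hγ1
  have hnn : ∀ᵐ x ∂P, 0 ≤ x := by
    rw [ae_iff]
    simpa [not_le] using hsupp
  have hPA : (P A).toReal = μ / γ := by
    rw [hmark, ENNReal.toReal_ofReal (by positivity)]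
  have hsplit : ∫ x in A, x ∂P + ∫ x in Aᶜ, x ∂P = μ := by
    rw [integral_add_compl hAm hint1, hmean]
  have hcnn : 0 ≤ ∫ x in Aᶜ, x ∂P :=
    setIntegral_nonneg_of_ae_restrict (ae_restrict_of_ae hnn)
  have hJ : ∫ x in A, (x - γ) ∂P = ∫ x in A, x ∂P - μ := by
    rw [integral_sub hint1.restrict (integrable_const γ), setIntegral_const, measureReal_def, hPA,
      smul_eq_mul, div_mul_cancel₀ _ (ne_of_gt hγ0)]
  have hJnn : 0 ≤ ∫ x in A, (x - γ) ∂P :=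
    setIntegral_nonneg hAm (fun x hx => by simpa [sub_nonneg, hAdef] using hx)
  have hJ0 : ∫ x in A, (x - γ) ∂P = 0 := by linarith
  have hc0 : ∫ x in Aᶜ, x ∂P = 0 := by linarith
  -- a.e. equalities
  have heqA : (fun x => x - γ) =ᵐ[P.restrict A] 0 := by
    refine (integral_eq_zero_iff_of_nonneg_ae ?_ (hint1.restrict.sub (integrable_const γ))).mp hJ0
    filter_upwards [ae_restrict_mem hAm] with x hx
    simpa [sub_nonneg, hAdef] using hx
  have heqC : (fun x : ℝ => x) =ᵐ[P.restrict Aᶜ] 0 := by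
    refine (integral_eq_zero_iff_of_nonneg_ae ?_ hint1.restrict).mp hc0
    exact ae_restrict_of_ae hnn
  -- second moment on A
  have hsqA : ∫ x in A, x^2 ∂P = γ * μ := by
    have : ∫ x in A, x^2 ∂P = ∫ x in A, γ^2 ∂P := by
      refine integral_congr_ae ?_
      filter_upwards [heqA] with x hx
      have hx' : x = γ := by
        have : x - γ = 0 := hx
        linarith
      rw [hx']
    rw [this, setIntegral_const, measureReal_def, hPA, smul_eq_mul]
    field_simp
  have hsqC : ∫ x in Aᶜ, x^2 ∂P = 0 := by
    have : ∫ x in Aᶜ, x^2 ∂P = ∫ x in Aᶜ, (0:ℝ) ∂P := by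
      refine integral_congr_ae ?_
      filter_upwards [heqC] with x hx
      have hx' : x = 0 := hx
      simp [hx']
    simpa using this
  have hS : ∫ x, x^2 ∂P = γ * μ := by
    rw [← integral_add_compl hAm hint2, hsqA, hsqC, add_zero]
  -- variance expansion
  have hexp : ∫ x, (x - μ)^2 ∂P = ∫ x, x^2 ∂P - 2*μ*μ + μ^2 := by
    have h1 : Integrable (fun x => 2*μ*x) P := hint1.const_mul _
    have h2 : Integrable (fun x => x^2 - 2*μ*x) P := hint2.sub h1
    have hcongr : ∫ x, (x - μ)^2 ∂P = ∫ x, (x^2 - 2*μ*x + μ^2) ∂P := by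
      refine integral_congr_ae (Filter.Eventually.of_forall fun x => ?_)
      ring
    rw [hcongr, integral_add h2 (integrable_const _), integral_sub hint2 h1,
      integral_const_mul, hmean, integral_const]
    simp
  rw [hvar, hS] at hexp
  -- contradiction
  have : σ^2 / μ = γ - μ := by
    field_simp
    linarith
  linarith
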